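/- Let l̂ = min{t ∈ ℕ : t·l ≡ 1 (mod n)}. Then for every integer m with m not congruent to 0 mod n and m not congruent to -1 mod n, the rational characteristic sequence satisfies k_{m - l̂} = k_m. -/

import Mathlib

/-- The rational characteristic sequence with respect to `(n, l)`:
`k_m = ⌊(m+1)l/n⌋ - ⌊ml/n⌋` for `m ∈ ℤ`. -/
def charSeq (n l : ℕ) (m : ℤ) : ℤ :=
  Int.fdiv ((m + 1) * l) n - Int.fdiv (m * l) n

/-- With `l̂ = min {t ∈ ℕ | t·l ≡ 1 (mod n)}`, one has `k_{m - l̂} = k_m`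
for `m` not ≡ `0` or `-1` mod `n`. -/
theorem charSeq_shift (n l : ℕ) (hn : 2 ≤ n) (hl : l < n)
    (hgcd : Nat.gcd n l = 1) (lhat : ℕ)
    (hlhat : lhat = sInf {t : ℕ | t * l % n = 1}) (m : ℤ)
    (h0 : ¬ (n : ℤ) ∣ m) (h1 : ¬ (n : ℤ) ∣ (m + 1)) :
    charSeq n l (m - lhat) = charSeq n l m := by
  have hn0 : (0:ℤ) < n := by exact_mod_cast (by omega : 0 < n)
  have hnne : (n:ℤ) ≠ 0 := ne_of_gt hn0
  -- existence of an inverse, hence lhat is in the set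
  obtain ⟨b, -, hb⟩ := Nat.exists_mul_mod_eq_one_of_coprime
    (Nat.coprime_comm.mp hgcd) (by omega)
  have hmem : lhat ∈ {t : ℕ | t * l % n = 1} := by
    rw [hlhat]
    exact Nat.sInf_mem ⟨b, by simpa [Nat.mul_comm] using hb⟩
  have hinv : ((lhat : ℤ) * l) % n = 1 := by
    have h : lhat * l % n = 1 := hmem
    exact_mod_cast h
  -- coprimality over ℤ
  have hcop : IsCoprime (n : ℤ) (l : ℤ) := by
    rw [Int.isCoprime_iff_gcd_eq_one]
    simpa [Int.gcd_natCast_natCast] using hgcd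
  -- key residue-shift lemma
  have key : ∀ x : ℤ, ¬ (n:ℤ) ∣ x →
      ((x - lhat) * l) % n = (x * l) % n - 1 := by
    intro x hx
    have hndvd : ¬ (n:ℤ) ∣ x * l := fun h => hx (hcop.dvd_of_dvd_mul_right h)
    have hr0 : (x * l) % n ≠ 0 := fun h => hndvd (Int.dvd_of_emod_eq_zero h)
    have hrlt : (x * l) % n < n := Int.emod_lt_of_pos _ hn0
    have hrge : 0 ≤ (x * l) % n := Int.emod_nonneg _ hnne
    have e1 : ((x - lhat) * l) % n = (x * l - (lhat:ℤ) * l) % n := by ring_nf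
    have e2 : (x * l - (lhat:ℤ) * l) % n = ((x * l) % n - ((lhat:ℤ) * l) % n) % n :=
      Int.sub_emod _ _ _
    rw [e1, e2, hinv]
    exact Int.emod_eq_of_lt (by omega) (by omega)
  have hA := key (m + 1) h1
  have hB := key m h0
  -- rewrite fdiv as ediv
  have hfd : ∀ a : ℤ, Int.fdiv (a * l) n = (a * l) / n := fun a =>
    Int.fdiv_eq_ediv_of_nonneg _ (le_of_lt hn0)
  unfold charSeq
  rw [hfd, hfd, hfd, hfd]
  have h1' : (m - (lhat:ℤ) + 1) = (m + 1) - lhat := by ring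
  rw [h1']
  -- use division identities and cancel n
  have dA := Int.mul_ediv_add_emod (((m + 1) - lhat) * l) n
  have dB := Int.mul_ediv_add_emod ((m - lhat) * l) n
  have dA' := Int.mul_ediv_add_emod ((m + 1) * l) n
  have dB' := Int.mul_ediv_add_emod (m * l) n
  have hdiff : ((m + 1) - (lhat:ℤ)) * l - (m - lhat) * l = (m + 1) * l - m * l := by ring
  apply mul_left_cancel₀ hnne
  rw [mul_sub, mul_sub]
  omega
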